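/- Let $K$ be a field, $n$ and $k$ positive integers, and $\alpha_1,\dots,\alpha_k$ distinct nonzero elements of $K$. In the field $K(X,Y)$, set $\Delta = \prod_{j=1}^k (X - \alpha_j Y)$, $\Delta_i = \Delta / (X - \alpha_i Y)$, and $A_i = \Delta_i X Y^n / \Delta$ for $1 \le i \le k$. Then for all $i \neq j$, the product $A_i A_j$ lies in the ideal generated by $Y$ in the subring $R = K[Y, A_1, \dots, A_k]$ of $K(X,Y)$. -/

import Mathlib

open MvPolynomial


private lemma key_identity {F : Type} [Field F] (x y a b : F) (m : ℕ)
    (h1 : x - a * y ≠ 0) (h2 : x - b * y ≠ 0) (h3 : b - a ≠ 0) :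
    (x * y ^ (m + 1) / (x - a * y)) * (x * y ^ (m + 1) / (x - b * y)) =
      y * (y ^ m * ((b - a)⁻¹ *
        (b * (x * y ^ (m + 1) / (x - b * y)) - a * (x * y ^ (m + 1) / (x - a * y))))) := by
  have e : b * (x * y ^ (m + 1) / (x - b * y)) - a * (x * y ^ (m + 1) / (x - a * y))
      = (b - a) * (x * (x * y ^ (m + 1)) / ((x - a * y) * (x - b * y))) := by
    rw [mul_div_assoc', mul_div_assoc', div_sub_div _ _ h2 h1, mul_div_assoc',
      div_eq_div_iff (mul_ne_zero h2 h1) (mul_ne_zero h1 h2)]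
    ring
  rw [e, ← mul_assoc (b - a)⁻¹, inv_mul_cancel₀ h3, one_mul, div_mul_div_comm]
  ring

/-- Let `K` be a field, `n, k` positive integers, and
`α₁, …, α_k` distinct nonzero elements of `K`.  In the field `K(X,Y)`, set
`Δ = ∏ⱼ (X - αⱼY)`, `Δᵢ = Δ/(X - αᵢY)`, and `Aᵢ = Δᵢ X Yⁿ / Δ`.  Then for all
`i ≠ j`, the product `AᵢAⱼ` lies in the ideal generated by `Y` in the subring
`R = K[Y, A₁, …, A_k]` of `K(X,Y)`, i.e. `AᵢAⱼ = Y·r` for some `r ∈ R`. -/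
theorem product_in_ideal_Y (K : Type) [Field K] (n k : ℕ) (hn : 0 < n)
    (hk : 0 < k) (α : Fin k → K) (hα : Function.Injective α)
    (hα0 : ∀ i, α i ≠ 0)
    (x y : FractionRing (MvPolynomial (Fin 2) K))
    (hx : x = algebraMap (MvPolynomial (Fin 2) K) _ (X 0))
    (hy : y = algebraMap (MvPolynomial (Fin 2) K) _ (X 1))
    (Δ : FractionRing (MvPolynomial (Fin 2) K))
    (hΔ : Δ = ∏ j : Fin k, (x - algebraMap K _ (α j) * y))
    (A : Fin k → FractionRing (MvPolynomial (Fin 2) K))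
    (hA : ∀ i, A i =
      (∏ j ∈ Finset.univ.erase i, (x - algebraMap K _ (α j) * y)) * x * y ^ n / Δ) :
    ∀ i j : Fin k, i ≠ j →
      ∃ r ∈ Algebra.adjoin K ({y} ∪ Set.range A), A i * A j = y * r := by
  obtain ⟨m, rfl⟩ : ∃ m, n = m + 1 := ⟨n - 1, (Nat.succ_pred_eq_of_pos hn).symm⟩
  have hxy : ∀ c : K, x - algebraMap K (FractionRing (MvPolynomial (Fin 2) K)) c * y ≠ 0 := by
    intro c
    have hc : algebraMap K (FractionRing (MvPolynomial (Fin 2) K)) c = algebraMap (MvPolynomial (Fin 2) K) (FractionRing (MvPolynomial (Fin 2) K)) (C c) := by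
      rw [IsScalarTower.algebraMap_apply K (MvPolynomial (Fin 2) K) (FractionRing (MvPolynomial (Fin 2) K))]
      rfl
    rw [hx, hy, hc, ← map_mul, ← map_sub]
    intro h
    have h0 : (X 0 - C c * X 1 : MvPolynomial (Fin 2) K) = 0 :=
      IsFractionRing.injective (MvPolynomial (Fin 2) K) (FractionRing (MvPolynomial (Fin 2) K)) (by simpa using h)
    have := congrArg (aeval (fun i : Fin 2 => if i = 0 then (1 : K) else 0)) h0
    simp at this
  have hΔ0 : Δ ≠ 0 := by
    rw [hΔ]; exact Finset.prod_ne_zero_iff.mpr fun j _ => hxy (α j)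
  have hA' : ∀ i, A i = x * y ^ (m + 1) / (x - algebraMap K (FractionRing (MvPolynomial (Fin 2) K)) (α i) * y) := by
    intro i
    have hP : (∏ j ∈ Finset.univ.erase i, (x - algebraMap K (FractionRing (MvPolynomial (Fin 2) K)) (α j) * y)) ≠ 0 :=
      Finset.prod_ne_zero_iff.mpr fun j _ => hxy (α j)
    rw [hA, hΔ, ← Finset.prod_erase_mul _ _ (Finset.mem_univ i), mul_assoc,
      mul_div_mul_left _ _ hP]
  intro i j hij
  have hab : α j - α i ≠ 0 := sub_ne_zero.mpr fun h => hij (hα h).symm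
  have hba : algebraMap K (FractionRing (MvPolynomial (Fin 2) K)) (α j) - algebraMap K (FractionRing (MvPolynomial (Fin 2) K)) (α i) ≠ 0 := by
    rw [← map_sub]
    intro h
    exact hab ((algebraMap K (FractionRing (MvPolynomial (Fin 2) K))).injective (by simpa using h))
  refine ⟨y ^ m * (algebraMap K (FractionRing (MvPolynomial (Fin 2) K)) (α j - α i)⁻¹ *
      (algebraMap K (FractionRing (MvPolynomial (Fin 2) K)) (α j) * A j - algebraMap K (FractionRing (MvPolynomial (Fin 2) K)) (α i) * A i)), ?_, ?_⟩
  · have hy' : y ∈ Algebra.adjoin K ({y} ∪ Set.range A) :=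
      Algebra.subset_adjoin (Set.mem_union_left _ rfl)
    have hAj : A j ∈ Algebra.adjoin K ({y} ∪ Set.range A) :=
      Algebra.subset_adjoin (Set.mem_union_right _ ⟨j, rfl⟩)
    have hAi : A i ∈ Algebra.adjoin K ({y} ∪ Set.range A) :=
      Algebra.subset_adjoin (Set.mem_union_right _ ⟨i, rfl⟩)
    exact mul_mem (pow_mem hy' m)
      (mul_mem (Subalgebra.algebraMap_mem _ _)
        (sub_mem (mul_mem (Subalgebra.algebraMap_mem _ _) hAj)
          (mul_mem (Subalgebra.algebraMap_mem _ _) hAi)))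
  · rw [hA' i, hA' j, map_inv₀, map_sub]
    exact key_identity x y _ _ m (hxy (α i)) (hxy (α j)) hba
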